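/- Let $u_\varepsilon$ be as in the tempered counterexample, so that $u_\varepsilon(\varepsilon^{-j} e_1) = \varepsilon^{j^2}$ for every integer $j \geq 1$ and small $\varepsilon$. Then there is no net $(v_\varepsilon)$ of functions satisfying a tempered moderateness bound ($\exists N: |v_\varepsilon(x)| \leq \varepsilon^{-N}(1+|x|)^N$ for small $\varepsilon$) such that $u_\varepsilon v_\varepsilon - 1$ is tempered negligible ($\exists N_0 \forall p: \sup_x |u_\varepsilon(x) v_\varepsilon(x) - 1| \leq C_p \varepsilon^p (1+|x|)^{N_0}$). That is, $u$ is not invertible in $\mathcal{G}_\tau(\mathbb{R}^d)$. -/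
import Mathlib


/-- Let `u_ε` be as in the tempered counterexample, so that
`u_ε(ε^{-j} e₁) = ε^{j²}` for every integer `j ≥ 1` and small `ε`. Then there
is no tempered-moderately-bounded net `(v_ε)` with `u_ε v_ε - 1` tempered
negligible: `u` is not invertible in `𝒢_τ(ℝ^d)`. -/
theorem stmt7 (d : ℕ) (hd : 0 < d)
    (u : ℝ → EuclideanSpace ℝ (Fin d) → ℝ)
    (hu : ∀ j : ℕ, 1 ≤ j → ∃ ε₀ > 0, ∀ ε : ℝ, 0 < ε → ε < ε₀ →
      u ε (EuclideanSpace.single ⟨0, hd⟩ (ε ^ (-(j:ℝ)))) = ε ^ ((j:ℝ)^2)) :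
    ¬ ∃ v : ℝ → EuclideanSpace ℝ (Fin d) → ℝ,
      (∃ N : ℕ, ∃ ε₀ > 0, ∀ ε : ℝ, 0 < ε → ε < ε₀ →
        ∀ x, |v ε x| ≤ ε ^ (-(N:ℝ)) * (1 + ‖x‖) ^ N) ∧
      (∃ N₀ : ℕ, ∀ p : ℕ, ∃ C > 0, ∃ ε₀ > 0, ∀ ε : ℝ, 0 < ε → ε < ε₀ →
        ∀ x, |u ε x * v ε x - 1| ≤ C * ε ^ p * (1 + ‖x‖) ^ N₀) := by
  rintro ⟨v, ⟨N, ε₁, hε₁, hv⟩, N₀, hneg⟩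
  obtain ⟨ε₂, hε₂, hu'⟩ := hu (N + 2) (by omega)
  obtain ⟨C, hC, ε₃, hε₃, hn⟩ := hneg ((N + 2) * N₀ + 1)
  have hB : (0:ℝ) < C * 2 ^ N₀ + 2 ^ N := by positivity
  set m : ℝ := min (min ε₁ ε₂) (min ε₃ (min 1 (1 / (C * 2 ^ N₀ + 2 ^ N)))) with hm
  have hmpos : 0 < m := by
    simp only [hm, lt_min_iff]
    exact ⟨⟨hε₁, hε₂⟩, hε₃, one_pos, by positivity⟩
  set ε : ℝ := m / 2 with hεdef
  have hεpos : 0 < ε := half_pos hmpos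
  have hεm : ε < m := half_lt_self hmpos
  have hε1 : ε < ε₁ := lt_of_lt_of_le hεm (le_trans (min_le_left _ _) (min_le_left _ _))
  have hε2 : ε < ε₂ := lt_of_lt_of_le hεm (le_trans (min_le_left _ _) (min_le_right _ _))
  have hε3 : ε < ε₃ := lt_of_lt_of_le hεm (le_trans (min_le_right _ _) (min_le_left _ _))
  have hεone : ε < 1 := lt_of_lt_of_le hεm
    (le_trans (min_le_right _ _) (le_trans (min_le_right _ _) (min_le_left _ _)))
  have hεB : ε < 1 / (C * 2 ^ N₀ + 2 ^ N) := lt_of_lt_of_le hεm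
    (le_trans (min_le_right _ _) (le_trans (min_le_right _ _) (min_le_right _ _)))
  set j : ℕ := N + 2 with hjdef
  set t : ℝ := ε ^ (-(j:ℝ)) with htdef
  have htpos : 0 < t := Real.rpow_pos_of_pos hεpos _
  have ht1 : 1 ≤ t :=
    Real.one_le_rpow_of_pos_of_le_one_of_nonpos hεpos hεone.le
      (neg_nonpos.mpr (Nat.cast_nonneg j))
  set x := EuclideanSpace.single (⟨0, hd⟩ : Fin d) t with hxdef
  have hxnorm : ‖x‖ = t := by
    rw [hxdef, EuclideanSpace.norm_single, Real.norm_eq_abs, abs_of_pos htpos]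
  have huv := hu' ε hεpos hε2
  have hvb := hv ε hεpos hε1 x
  have hnb := hn ε hεpos hε3 x
  rw [hxnorm] at hvb hnb
  have htN : ∀ k : ℕ, t ^ k = ε ^ ((-(j:ℝ)) * (k:ℝ)) := by
    intro k
    rw [htdef, ← Real.rpow_natCast (ε ^ (-(j:ℝ))) k, ← Real.rpow_mul hεpos.le]
  have hA : |u ε x * v ε x| ≤ 2 ^ N * ε := by
    have h2t : (1 + t) ^ N ≤ 2 ^ N * t ^ N := by
      calc (1 + t) ^ N ≤ (2 * t) ^ N := pow_le_pow_left₀ (by positivity) (by linarith) N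
        _ = 2 ^ N * t ^ N := mul_pow 2 t N
    have hupos : 0 < u ε x := by rw [huv]; exact Real.rpow_pos_of_pos hεpos _
    have habs : |u ε x * v ε x| = u ε x * |v ε x| := by
      rw [abs_mul, abs_of_pos hupos]
    rw [habs, huv]
    calc ε ^ ((j:ℝ)^2) * |v ε x|
        ≤ ε ^ ((j:ℝ)^2) * (ε ^ (-(N:ℝ)) * (1 + t) ^ N) :=
          mul_le_mul_of_nonneg_left hvb (Real.rpow_pos_of_pos hεpos _).le
      _ ≤ ε ^ ((j:ℝ)^2) * (ε ^ (-(N:ℝ)) * (2 ^ N * t ^ N)) :=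
          mul_le_mul_of_nonneg_left
            (mul_le_mul_of_nonneg_left h2t (Real.rpow_pos_of_pos hεpos _).le)
            (Real.rpow_pos_of_pos hεpos _).le
      _ = 2 ^ N * ε ^ ((j:ℝ)^2 + (-(N:ℝ)) + (-(j:ℝ)) * (N:ℝ)) := by
          rw [htN N, Real.rpow_add hεpos, Real.rpow_add hεpos]; ring
      _ ≤ 2 ^ N * ε ^ (1:ℝ) := by
          apply mul_le_mul_of_nonneg_left _ (by positivity)
          apply Real.rpow_le_rpow_of_exponent_ge hεpos hεone.le
          have hjc : (j:ℝ) = (N:ℝ) + 2 := by rw [hjdef]; push_cast; ring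
          rw [hjc]
          nlinarith [Nat.cast_nonneg (α := ℝ) N]
      _ = 2 ^ N * ε := by rw [Real.rpow_one]
  have hB2 : |u ε x * v ε x - 1| ≤ C * 2 ^ N₀ * ε := by
    have h2t : (1 + t) ^ N₀ ≤ 2 ^ N₀ * t ^ N₀ := by
      calc (1 + t) ^ N₀ ≤ (2 * t) ^ N₀ := pow_le_pow_left₀ (by positivity) (by linarith) N₀
        _ = 2 ^ N₀ * t ^ N₀ := mul_pow 2 t N₀
    calc |u ε x * v ε x - 1| ≤ C * ε ^ (j * N₀ + 1) * (1 + t) ^ N₀ := hnb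
      _ ≤ C * ε ^ (j * N₀ + 1) * (2 ^ N₀ * t ^ N₀) :=
          mul_le_mul_of_nonneg_left h2t (by positivity)
      _ = C * 2 ^ N₀ * (ε ^ (j * N₀ + 1) * t ^ N₀) := by ring
      _ = C * 2 ^ N₀ * ε := by
          rw [htN N₀, ← Real.rpow_natCast ε (j * N₀ + 1), ← Real.rpow_add hεpos]
          have hexp : ((j * N₀ + 1 : ℕ) : ℝ) + (-(j:ℝ)) * (N₀:ℝ) = 1 := by push_cast; ring
          rw [hexp, Real.rpow_one]
  have hone : (1:ℝ) ≤ |u ε x * v ε x - 1| + |u ε x * v ε x| := by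
    calc (1:ℝ) = |u ε x * v ε x - (u ε x * v ε x - 1)| := by norm_num
      _ ≤ |u ε x * v ε x| + |u ε x * v ε x - 1| := abs_sub _ _
      _ = |u ε x * v ε x - 1| + |u ε x * v ε x| := by ring
  have hmul := (lt_div_iff₀ hB).1 hεB
  have hexpand : ε * (C * 2 ^ N₀ + 2 ^ N) = C * 2 ^ N₀ * ε + 2 ^ N * ε := by ring
  linarith
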